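/- Let u : ℝ^J → ℝ ∪ {−∞} be upper semicontinuous with u(x⁰) finite, let D(x) := sup{r ∈ ℝ : u(x⁰ + x − r·g) ≥ u(x⁰)}, and let p ∈ ℝ^J be a supergradient of D at x̄ with p·g = 1, so that the surplus s := D(x̄) − p·x̄ satisfies s ≥ 0. If δ > 0 is such that u(y + s·g) ≥ u(y) + δ·s for y := x⁰ + x̄ − D(x̄)·g, then the post-trade position x¹ := x⁰ + x̄ − (p·x̄)·g satisfies u(x¹) ≥ u(x⁰) + δ·s. -/

import Mathlib

open scoped BigOperators
open Metric Filter

noncomputable section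

/-- The inner product `p·y = ∑ j, p j * y j`. -/
def dotp {J : Type*} [Fintype J] (p y : EuclideanSpace ℝ J) : ℝ := ∑ j, p j * y j

/-- A function `u : ℝ^J → ℝ ∪ {±∞}` is concave iff its hypograph is convex. -/
def HypoConcave {J : Type*} [Fintype J] (u : EuclideanSpace ℝ J → EReal) : Prop :=
  Convex ℝ {q : EuclideanSpace ℝ J × ℝ | (q.2 : EReal) ≤ u q.1}

/-- Indifference price function `D(x) = sup {r ∈ ℝ : u(x⁰ + x − r·g) ≥ u(x⁰)}`,
the supremum being taken in `ℝ ∪ {±∞}`. -/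
def indiff {J : Type*} [Fintype J] (u : EuclideanSpace ℝ J → EReal)
    (x0 g x : EuclideanSpace ℝ J) : EReal :=
  sSup {e : EReal | ∃ r : ℝ, e = (r : EReal) ∧ u x0 ≤ u (x0 + x - r • g)}

/-- `p` is a supergradient of `D` at `xb`: `D xb` is finite and
`D x ≤ D xb + p·(x − xb)` for all `x`. -/
def IsSupergradient {J : Type*} [Fintype J] (D : EuclideanSpace ℝ J → EReal)
    (p xb : EuclideanSpace ℝ J) : Prop :=
  D xb ≠ ⊥ ∧ D xb ≠ ⊤ ∧ ∀ x, D x ≤ D xb + ((dotp p (x - xb) : ℝ) : EReal)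

/-- Optimal value `v(z)` of the perturbed market clearing problem `(P_z)`. -/
def marketValue {I J : Type*} [Fintype I] [Fintype J]
    (D : I → EuclideanSpace ℝ J → EReal) (z : EuclideanSpace ℝ J) : EReal :=
  sSup {e : EReal | ∃ x : I → EuclideanSpace ℝ J, (∑ i, x i) = z ∧ e = ∑ i, D i (x i)}

/-- Optimal value of problem `(P')`, the total consumer surplus at allocation `w`. -/
def CSval {I J : Type*} [Fintype I] [Fintype J]
    (u : I → EuclideanSpace ℝ J → EReal) (g : EuclideanSpace ℝ J)
    (w : I → EuclideanSpace ℝ J) : EReal :=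
  sSup {e : EReal | ∃ s : ℝ, e = (s : EReal) ∧ ∃ z : I → EuclideanSpace ℝ J,
    (∑ i, z i) + s • g = ∑ i, w i ∧ ∀ i, u i (w i) ≤ u i (z i)}

/-- Recession function `u^∞(y) = inf_{α>0} (u(x⁰ + α·y) − u(x⁰))/α`. -/
def recession {J : Type*} [Fintype J] (u : EuclideanSpace ℝ J → EReal)
    (x0 y : EuclideanSpace ℝ J) : EReal :=
  sInf {e : EReal | ∃ α : ℝ, 0 < α ∧ e = (u (x0 + α • y) - u x0) / (α : EReal)}

/-- Pareto efficiency of an allocation `x` with total endowment `∑ i, x i`. -/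
def ParetoEfficient {I J : Type*} [Fintype I] [Fintype J]
    (u : I → EuclideanSpace ℝ J → EReal) (x : I → EuclideanSpace ℝ J) : Prop :=
  ¬ ∃ x' : I → EuclideanSpace ℝ J, (∑ i, x' i) = (∑ i, x i) ∧
      (∀ i, u i (x i) ≤ u i (x' i)) ∧ ∃ i, u i (x i) < u i (x' i)

/-- the surplus is nonnegative and the post-trade position gains
at least `δ·s` in utility. -/
theorem post_trade_surplus_gain
    {J : Type*} [Fintype J] [Nonempty J]
    (u : EuclideanSpace ℝ J → EReal) (g x0 : EuclideanSpace ℝ J)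
    (husc : UpperSemicontinuous u)
    (hconc : HypoConcave u)
    (hne_top : ∀ x, u x ≠ ⊤)
    (hfin : u x0 ≠ ⊥)
    (hmono : ∀ x : EuclideanSpace ℝ J, ∀ r : ℝ, u x ≠ ⊥ → 0 < r →
      u x < u (x + r • g))
    (p xb : EuclideanSpace ℝ J)
    (hsg : IsSupergradient (indiff u x0 g) p xb)
    (hpg : dotp p g = 1)
    (d : ℝ) (hd : (d : EReal) = indiff u x0 g xb)
    (δ : ℝ) (hδ : 0 < δ)
    (hgain : u (x0 + xb - d • g) + (((δ * (d - dotp p xb)) : ℝ) : EReal) ≤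
      u ((x0 + xb - d • g) + (d - dotp p xb) • g)) :
    0 ≤ d - dotp p xb ∧
      u x0 + (((δ * (d - dotp p xb)) : ℝ) : EReal) ≤
        u (x0 + xb - dotp p xb • g) := by
  -- Step 1: s := d - p·xb ≥ 0
  have hs0 : 0 ≤ d - dotp p xb := by
    have h0mem : ((0:ℝ) : EReal) ∈
        {e : EReal | ∃ r : ℝ, e = (r : EReal) ∧ u x0 ≤ u (x0 + 0 - r • g)} :=
      ⟨0, rfl, by simp⟩
    have hD0 : ((0:ℝ) : EReal) ≤ indiff u x0 g 0 := le_sSup h0mem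
    have hsg0 := hsg.2.2 0
    rw [← hd] at hsg0
    have hdot : dotp p (0 - xb) = -(dotp p xb) := by
      simp [dotp, mul_comm, ← Finset.sum_neg_distrib]
    rw [hdot] at hsg0
    have h2 : ((0:ℝ) : EReal) ≤ ((d - dotp p xb : ℝ) : EReal) := by
      refine le_trans (le_trans hD0 hsg0) (le_of_eq ?_)
      rw [← EReal.coe_add]
      norm_num
      exact (sub_eq_add_neg (d:EReal) _).symm
    exact_mod_cast h2
  refine ⟨hs0, ?_⟩
  -- Step 2: u x0 ≤ u (x0 + xb - d • g)
  have key : ∀ r : ℝ, r < d → u x0 ≤ u (x0 + xb - r • g) := by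
    intro r hr
    have hlt : (r : EReal) < indiff u x0 g xb := by
      rw [← hd]; exact_mod_cast hr
    rw [indiff, lt_sSup_iff] at hlt
    obtain ⟨e, ⟨r', rfl, hr'⟩, hlt⟩ := hlt
    have hrr' : r < r' := by exact_mod_cast hlt
    rcases eq_or_lt_of_le (le_of_lt hrr') with h | h
    · rw [h]; exact hr'
    have hne : u (x0 + xb - r' • g) ≠ ⊥ := fun hb => hfin (by
      simpa [hb, le_bot_iff] using hr')
    have := hmono (x0 + xb - r' • g) (r' - r) hne (by linarith)
    have heq : x0 + xb - r' • g + (r' - r) • g = x0 + xb - r • g := by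
      module
    rw [heq] at this
    exact le_trans hr' this.le
  have husc_y : u x0 ≤ u (x0 + xb - d • g) := by
    by_contra hlt
    have hlt' : u (x0 + xb - d • g) < u x0 := lt_of_not_ge hlt
    have hev : ∀ᶠ z in nhds (x0 + xb - d • g), u z < u x0 :=
      husc (x0 + xb - d • g) (u x0) hlt'
    have hcont : Tendsto (fun r : ℝ => x0 + xb - r • g) (nhdsWithin d (Set.Iio d))
        (nhds (x0 + xb - d • g)) := by
      have : Continuous (fun r : ℝ => x0 + xb - r • g) := by fun_prop
      exact (this.tendsto d).mono_left nhdsWithin_le_nhds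
    have hev2 : ∀ᶠ r in nhdsWithin d (Set.Iio d),
        u (x0 + xb - r • g) < u x0 := hcont.eventually hev
    have hev3 : ∀ᶠ r : ℝ in nhdsWithin d (Set.Iio d), r < d :=
      eventually_mem_nhdsWithin
    obtain ⟨r, h1, h2⟩ := (hev2.and hev3).exists
    exact absurd (key r h2) (not_le.mpr h1)
  -- Step 3: combine with hgain
  have hmon : u x0 + (((δ * (d - dotp p xb)) : ℝ) : EReal) ≤
      u (x0 + xb - d • g) + (((δ * (d - dotp p xb)) : ℝ) : EReal) :=
    add_le_add husc_y le_rfl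
  have heq2 : (x0 + xb - d • g) + (d - dotp p xb) • g = x0 + xb - dotp p xb • g := by
    module
  calc u x0 + (((δ * (d - dotp p xb)) : ℝ) : EReal)
      ≤ u (x0 + xb - d • g) + (((δ * (d - dotp p xb)) : ℝ) : EReal) := hmon
    _ ≤ u ((x0 + xb - d • g) + (d - dotp p xb) • g) := hgain
    _ = u (x0 + xb - dotp p xb • g) := by rw [heq2]
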